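/- The specialized q-Appell series f(x₁,x₂) = Σ_{m,n≥0} (a;q)_{m+n}(b;q)_m(b';q)_n / ((bb';q)_{m+n}(q;q)_m(q;q)_n) x₁^m x₂^n satisfies the second-order q-difference equation (aq x₁ − b')(aq x₂ − b) f(q²x₁, q²x₂) + q(x₁−1)(x₂−1) f(x₁,x₂) − (aq(q+1)x₁x₂ − q(a+b)x₁ − q(a+b')x₂ + bb' + q) f(qx₁, qx₂) = 0, as an identity of formal power series in x₁, x₂. -/

import Mathlib

/-- The q-Pochhammer symbol `(z;q)_n = ∏_{j=0}^{n-1} (1 - z q^j)`. -/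
noncomputable def qPoch (q z : ℂ) (n : ℕ) : ℂ := ∏ j ∈ Finset.range n, (1 - z * q ^ j)

lemma qPoch_zero' (q z : ℂ) : qPoch q z 0 = 1 := Finset.prod_range_zero _

lemma qPoch_succ' (q z : ℂ) (n : ℕ) :
    qPoch q z (n + 1) = qPoch q z n * (1 - z * q ^ n) := Finset.prod_range_succ _ _

set_option maxHeartbeats 1000000 in
/-- The specialized q-Appell series (with `c = bb'`) satisfies the second-order
q-difference equation
`(aqx₁-b')(aqx₂-b) f(q²x₁,q²x₂) + q(x₁-1)(x₂-1) f(x₁,x₂)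
  - (aq(q+1)x₁x₂ - q(a+b)x₁ - q(a+b')x₂ + bb' + q) f(qx₁,qx₂) = 0`,
stated coefficientwise (as an identity of formal power series in `x₁, x₂`):
`F m n` denotes the coefficient of `x₁^m x₂^n`, extended by zero to negative indices. -/
theorem qAppell_specialized_second_order (q a b b' : ℂ)
    (hq0 : 0 < ‖q‖) (hq1 : ‖q‖ < 1)
    (hbb' : ∀ n : ℕ, b * b' * q ^ n ≠ 1)
    (F : ℤ → ℤ → ℂ)
    (hF0 : ∀ m n : ℤ, m < 0 ∨ n < 0 → F m n = 0)
    (hF : ∀ m n : ℕ, F m n =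
      qPoch q a (m + n) * qPoch q b m * qPoch q b' n
        / (qPoch q (b * b') (m + n) * qPoch q q m * qPoch q q n)) :
    ∀ m n : ℤ,
      (a ^ 2 * q ^ 2 * q ^ (2 * (m - 1) + 2 * (n - 1)) * F (m - 1) (n - 1)
        - a * b * q * q ^ (2 * (m - 1) + 2 * n) * F (m - 1) n
        - a * b' * q * q ^ (2 * m + 2 * (n - 1)) * F m (n - 1)
        + b * b' * q ^ (2 * m + 2 * n) * F m n)
      + q * (F (m - 1) (n - 1) - F (m - 1) n - F m (n - 1) + F m n)
      - (a * q * (q + 1) * q ^ ((m - 1) + (n - 1)) * F (m - 1) (n - 1)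
        - q * (a + b) * q ^ ((m - 1) + n) * F (m - 1) n
        - q * (a + b') * q ^ (m + (n - 1)) * F m (n - 1)
        + (b * b' + q) * q ^ (m + n) * F m n) = 0 := by
  have hqne : q ≠ 0 := by
    intro h; rw [h] at hq0; simp at hq0
  have hqpow : ∀ k : ℕ, 1 - q * q ^ k ≠ 0 := by
    intro k
    have h2 : ‖q * q ^ k‖ < 1 := by
      rw [norm_mul, norm_pow]
      calc ‖q‖ * ‖q‖ ^ k ≤ ‖q‖ * 1 := by
            have := pow_le_one₀ (norm_nonneg q) hq1.le (n := k)
            nlinarith [norm_nonneg q]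
        _ = ‖q‖ := mul_one _
        _ < 1 := hq1
    intro h
    have : q * q ^ k = 1 := by linear_combination -h
    rw [this] at h2; simp at h2
  have hbbpow : ∀ k : ℕ, 1 - b * b' * q ^ k ≠ 0 :=
    fun k => sub_ne_zero.mpr (Ne.symm (hbb' k))
  have hDQ : ∀ k : ℕ, qPoch q q k ≠ 0 := by
    intro k
    exact Finset.prod_ne_zero_iff.mpr (fun j _ => hqpow j)
  have hDC : ∀ k : ℕ, qPoch q (b * b') k ≠ 0 := by
    intro k
    exact Finset.prod_ne_zero_iff.mpr (fun j _ => hbbpow j)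
  intro m n
  rcases lt_or_ge m 0 with hm | hm
  · rw [hF0 (m - 1) (n - 1) (Or.inl (by omega)), hF0 (m - 1) n (Or.inl (by omega)),
      hF0 m (n - 1) (Or.inl hm), hF0 m n (Or.inl hm)]
    ring
  rcases lt_or_ge n 0 with hn | hn
  · rw [hF0 (m - 1) (n - 1) (Or.inr (by omega)), hF0 (m - 1) n (Or.inr hn),
      hF0 m (n - 1) (Or.inr (by omega)), hF0 m n (Or.inr hn)]
    ring
  rcases eq_or_lt_of_le hm with hm0 | hm1
  · -- m = 0
    subst_vars
    rcases eq_or_lt_of_le hn with hn0 | hn1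
    · -- n = 0
      subst_vars
      rw [hF0 ((0:ℤ) - 1) ((0:ℤ) - 1) (Or.inl (by omega)),
        hF0 ((0:ℤ) - 1) 0 (Or.inl (by omega)),
        hF0 (0:ℤ) ((0:ℤ) - 1) (Or.inr (by omega))]
      have h0 := hF 0 0
      push_cast at h0
      rw [h0]
      simp only [qPoch_zero']
      norm_num
    · -- n = N + 1
      obtain ⟨N, rfl⟩ : ∃ N : ℕ, n = (N : ℤ) + 1 := ⟨(n - 1).toNat, by omega⟩
      rw [hF0 ((0:ℤ) - 1) ((N:ℤ) + 1 - 1) (Or.inl (by omega)),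
        hF0 ((0:ℤ) - 1) ((N:ℤ) + 1) (Or.inl (by omega))]
      rw [show (N:ℤ) + 1 - 1 = (N:ℤ) from by ring]
      have h1 := hF 0 N
      have h2 := hF 0 (N + 1)
      push_cast at h1 h2
      rw [h1, h2]
      simp only [Nat.zero_add, qPoch_succ', qPoch_zero']
      simp only [two_mul, zpow_add₀ hqne, zpow_natCast, zpow_one]
      have hbN : 1 - q ^ N * b * b' ≠ 0 := by
        convert hbbpow N using 2; ring
      field_simp [hDC N, hDQ N, hbbpow N, hqpow N, hbN]
      ring
  · -- m = M + 1
    obtain ⟨M, rfl⟩ : ∃ M : ℕ, m = (M : ℤ) + 1 := ⟨(m - 1).toNat, by omega⟩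
    rw [show (M:ℤ) + 1 - 1 = (M:ℤ) from by ring]
    rcases eq_or_lt_of_le hn with hn0 | hn1
    · -- n = 0
      subst_vars
      rw [hF0 ((M:ℤ)) ((0:ℤ) - 1) (Or.inr (by omega)),
        hF0 ((M:ℤ) + 1) ((0:ℤ) - 1) (Or.inr (by omega))]
      have h1 := hF M 0
      have h2 := hF (M + 1) 0
      push_cast at h1 h2
      rw [h1, h2]
      simp only [Nat.add_zero, qPoch_succ', qPoch_zero']
      simp only [two_mul, zpow_add₀ hqne, zpow_natCast, zpow_one]
      have hbM : 1 - q ^ M * b * b' ≠ 0 := by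
        convert hbbpow M using 2; ring
      field_simp [hDC M, hDQ M, hbbpow M, hqpow M, hbM]
      ring
    · -- n = N + 1
      obtain ⟨N, rfl⟩ : ∃ N : ℕ, n = (N : ℤ) + 1 := ⟨(n - 1).toNat, by omega⟩
      rw [show (N:ℤ) + 1 - 1 = (N:ℤ) from by ring]
      have h1 := hF M N
      have h2 := hF M (N + 1)
      have h3 := hF (M + 1) N
      have h4 := hF (M + 1) (N + 1)
      push_cast at h1 h2 h3 h4
      rw [show M + (N + 1) = M + N + 1 from by ring] at h2
      rw [show M + 1 + N = M + N + 1 from by ring] at h3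
      rw [show M + 1 + (N + 1) = M + N + 1 + 1 from by ring] at h4
      simp only [qPoch_succ'] at h2 h3 h4
      set NA := qPoch q a (M + N) with hNA
      set NB := qPoch q b M with hNB
      set NB' := qPoch q b' N with hNB'
      set CB := qPoch q (b * b') (M + N) with hCB
      set QM := qPoch q q M with hQM
      set QN := qPoch q q N with hQN
      set D := CB * (1 - b * b' * q ^ (M + N)) * (1 - b * b' * q ^ (M + N + 1)) *
        QM * (1 - q * q ^ M) * QN * (1 - q * q ^ N) with hD
      have hDne : D ≠ 0 := by
        apply_rules [mul_ne_zero, hDC, hDQ, hbbpow, hqpow]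
      have hFa : F ↑M ↑N = NA * NB * NB' * ((1 - b * b' * q ^ (M + N)) *
          (1 - b * b' * q ^ (M + N + 1)) * (1 - q * q ^ M) * (1 - q * q ^ N)) / D := by
        rw [h1, div_eq_div_iff (by apply_rules [mul_ne_zero, hDC, hDQ]) hDne]
        rw [hD]; ring
      have hFb : F ↑M (↑N + 1) = NA * (1 - a * q ^ (M + N)) * NB * (NB' * (1 - b' * q ^ N)) *
          ((1 - b * b' * q ^ (M + N + 1)) * (1 - q * q ^ M)) / D := by
        rw [h2, div_eq_div_iff (by apply_rules [mul_ne_zero, hDC, hDQ, hbbpow, hqpow]) hDne]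
        rw [hD]; ring
      have hFc : F (↑M + 1) ↑N = NA * (1 - a * q ^ (M + N)) * (NB * (1 - b * q ^ M)) * NB' *
          ((1 - b * b' * q ^ (M + N + 1)) * (1 - q * q ^ N)) / D := by
        rw [h3, div_eq_div_iff (by apply_rules [mul_ne_zero, hDC, hDQ, hbbpow, hqpow]) hDne]
        rw [hD]; ring
      have hFd : F (↑M + 1) (↑N + 1) = NA * (1 - a * q ^ (M + N)) * (1 - a * q ^ (M + N + 1)) *
          (NB * (1 - b * q ^ M)) * (NB' * (1 - b' * q ^ N)) / D := by
        rw [h4, div_eq_div_iff (by apply_rules [mul_ne_zero, hDC, hDQ, hbbpow, hqpow]) hDne]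
        rw [hD]; ring
      rw [hFa, hFb, hFc, hFd]
      simp only [two_mul, zpow_add₀ hqne, zpow_natCast, zpow_one]
      simp only [← mul_div_assoc, ← add_div, div_sub_div_same]
      exact div_eq_zero_iff.mpr (Or.inl (by ring))
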